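/- Let φ̄(m) for m ∈ ℕ denote a maximal m-sparse eigenvalue of a positive semidefinite matrix Q, i.e., φ̄(m)^2 = max over δ with |supp(δ)| ≤ m of (δ'Qδ)/‖δ‖_2^2. Then φ̄ is sublinear in the sense that for any positive integers k, m, φ̄(km)^2 ≤ ⌈k⌉ φ̄(m)^2 ≤ 2k φ̄(m)^2 (for k ≥ 1). -/

import Mathlib

open scoped BigOperators Matrix

/-- The squared maximal `m`-sparse eigenvalue of a matrix `Q`:
`φ̄(m)² = sup { δ'Qδ : |supp(δ)| ≤ m, ‖δ‖₂² = 1 }`. -/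
noncomputable def sparseEigSq {p : ℕ} (Q : Matrix (Fin p) (Fin p) ℝ) (m : ℕ) : ℝ :=
  sSup {r : ℝ | ∃ δ : Fin p → ℝ,
    (Function.support δ).ncard ≤ m ∧ δ ⬝ᵥ δ = 1 ∧ r = δ ⬝ᵥ Q.mulVec δ}

namespace SparseEigAux

lemma dot_sum_right {p n : ℕ} (x : Fin p → ℝ) (w : Fin n → Fin p → ℝ) :
    x ⬝ᵥ (∑ i, w i) = ∑ i, x ⬝ᵥ w i := by
  simp only [dotProduct, Finset.sum_apply, Finset.mul_sum]
  exact Finset.sum_comm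

lemma dot_sum_left {p n : ℕ} (x : Fin p → ℝ) (w : Fin n → Fin p → ℝ) :
    (∑ i, w i) ⬝ᵥ x = ∑ i, w i ⬝ᵥ x := by
  simp only [dotProduct, Finset.sum_apply, Finset.sum_mul]
  exact Finset.sum_comm

lemma quad_nonneg {p : ℕ} {Q : Matrix (Fin p) (Fin p) ℝ} (hQ : Q.PosSemidef)
    (x : Fin p → ℝ) : 0 ≤ x ⬝ᵥ Q.mulVec x := by
  simpa using hQ.dotProduct_mulVec_nonneg x

lemma quad_symm {p : ℕ} {Q : Matrix (Fin p) (Fin p) ℝ} (hQ : Q.PosSemidef)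
    (x y : Fin p → ℝ) : x ⬝ᵥ Q.mulVec y = y ⬝ᵥ Q.mulVec x := by
  have ht : Qᵀ = Q := hQ.1
  rw [Matrix.dotProduct_mulVec, ← Matrix.mulVec_transpose, ht, dotProduct_comm]

lemma quad_cs {p : ℕ} {Q : Matrix (Fin p) (Fin p) ℝ} (hQ : Q.PosSemidef)
    (x y : Fin p → ℝ) :
    2 * (x ⬝ᵥ Q.mulVec y) ≤ x ⬝ᵥ Q.mulVec x + y ⬝ᵥ Q.mulVec y := by
  have h := quad_nonneg hQ (x - y)
  rw [Matrix.mulVec_sub, dotProduct_sub, sub_dotProduct,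
    sub_dotProduct, quad_symm hQ y x] at h
  linarith

/-- The defining set of `sparseEigSq`. -/
def S {p : ℕ} (Q : Matrix (Fin p) (Fin p) ℝ) (m : ℕ) : Set ℝ :=
  {r : ℝ | ∃ δ : Fin p → ℝ,
    (Function.support δ).ncard ≤ m ∧ δ ⬝ᵥ δ = 1 ∧ r = δ ⬝ᵥ Q.mulVec δ}

lemma sparseEigSq_eq {p : ℕ} (Q : Matrix (Fin p) (Fin p) ℝ) (m : ℕ) :
    sparseEigSq Q m = sSup (S Q m) := rfl

lemma bddAbove_S {p : ℕ} (Q : Matrix (Fin p) (Fin p) ℝ) (m : ℕ) :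
    BddAbove (S Q m) := by
  refine ⟨∑ i, ∑ j, |Q i j|, ?_⟩
  rintro r ⟨δ, -, hnorm, rfl⟩
  have habs : ∀ i, |δ i| ≤ 1 := by
    intro i
    have h1 : δ i ^ 2 ≤ ∑ j, δ j ^ 2 :=
      Finset.single_le_sum (fun j _ => sq_nonneg (δ j)) (Finset.mem_univ i)
    have hsum : ∑ j, δ j ^ 2 = 1 := by
      simpa [dotProduct, sq] using hnorm
    exact abs_le_one_iff_mul_self_le_one.mpr (by nlinarith)
  calc δ ⬝ᵥ Q.mulVec δ ≤ |δ ⬝ᵥ Q.mulVec δ| := le_abs_self _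
    _ ≤ ∑ i, |δ i * ∑ j, Q i j * δ j| := by
        rw [dotProduct]
        exact Finset.abs_sum_le_sum_abs _ _
    _ ≤ ∑ i, ∑ j, |Q i j| := by
        refine Finset.sum_le_sum fun i _ => ?_
        rw [abs_mul]
        calc |δ i| * |∑ j, Q i j * δ j| ≤ 1 * ∑ j, |Q i j * δ j| := by
              refine mul_le_mul (habs i) (Finset.abs_sum_le_sum_abs _ _)
                (abs_nonneg _) (by norm_num)
          _ = ∑ j, |Q i j| * |δ j| := by rw [one_mul]; simp [abs_mul]
          _ ≤ ∑ j, |Q i j| := by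
              refine Finset.sum_le_sum fun j _ => ?_
              calc |Q i j| * |δ j| ≤ |Q i j| * 1 :=
                    mul_le_mul_of_nonneg_left (habs j) (abs_nonneg _)
                _ = |Q i j| := mul_one _

lemma sparseEigSq_nonneg {p : ℕ} {Q : Matrix (Fin p) (Fin p) ℝ} (hQ : Q.PosSemidef)
    (m : ℕ) : 0 ≤ sparseEigSq Q m := by
  apply Real.sSup_nonneg
  rintro r ⟨δ, -, -, rfl⟩
  exact quad_nonneg hQ δ

lemma le_sparseEigSq {p : ℕ} {Q : Matrix (Fin p) (Fin p) ℝ} {m : ℕ} {r : ℝ}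
    (hr : r ∈ S Q m) : r ≤ sparseEigSq Q m :=
  le_csSup (bddAbove_S Q m) hr

/-- Block bound: a vector with `m`-sparse support has quadratic form bounded by
`sparseEigSq Q m` times its squared norm. -/
lemma quad_le_sparse {p : ℕ} {Q : Matrix (Fin p) (Fin p) ℝ} (hQ : Q.PosSemidef)
    {m : ℕ} (v : Fin p → ℝ) (hv : (Function.support v).ncard ≤ m) :
    v ⬝ᵥ Q.mulVec v ≤ sparseEigSq Q m * (v ⬝ᵥ v) := by
  have hc : v ⬝ᵥ v = ∑ i, v i ^ 2 := by simp [dotProduct, sq]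
  have hc0 : 0 ≤ v ⬝ᵥ v := by rw [hc]; positivity
  rcases eq_or_lt_of_le hc0 with h0 | hpos
  · -- v = 0
    have hv0 : v = 0 := by
      funext i
      have h1 : ∑ i, v i ^ 2 = 0 := by rw [← hc, ← h0]
      have := (Finset.sum_eq_zero_iff_of_nonneg
        (fun j _ => sq_nonneg (v j))).mp h1 i (Finset.mem_univ i)
      exact pow_eq_zero_iff (by norm_num) |>.mp this
    simp [hv0]
  · set c : ℝ := v ⬝ᵥ v with hcdef
    set u : Fin p → ℝ := (Real.sqrt c)⁻¹ • v with hu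
    have hsc : Real.sqrt c > 0 := Real.sqrt_pos.mpr hpos
    have huu : u ⬝ᵥ u = 1 := by
      rw [hu, smul_dotProduct, dotProduct_smul]
      simp only [smul_eq_mul, ← hcdef]
      rw [← mul_assoc, ← mul_inv, Real.mul_self_sqrt hpos.le]
      field_simp
    have husupp : Function.support u = Function.support v := by
      ext i
      simp only [hu, Function.mem_support, Pi.smul_apply, smul_eq_mul]
      constructor
      · intro h h'; exact h (by rw [h']; ring)
      · intro h h'; exact h (by
          rcases mul_eq_zero.mp h' with h'' | h''
          · exact absurd h'' (by positivity)
          · exact h'')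
    have hmem : u ⬝ᵥ Q.mulVec u ∈ S Q m := ⟨u, by rw [husupp]; exact hv, huu, rfl⟩
    have hle := le_sparseEigSq hmem
    have hquu : u ⬝ᵥ Q.mulVec u = ((Real.sqrt c)⁻¹ * (Real.sqrt c)⁻¹) * (v ⬝ᵥ Q.mulVec v) := by
      rw [hu, Matrix.mulVec_smul, smul_dotProduct, dotProduct_smul]
      simp only [smul_eq_mul]; ring
    rw [hquu, ← mul_inv, Real.mul_self_sqrt hpos.le] at hle
    have := mul_le_mul_of_nonneg_left hle hpos.le
    rw [mul_comm c (sparseEigSq Q m)] at this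
    calc v ⬝ᵥ Q.mulVec v = c * (c⁻¹ * (v ⬝ᵥ Q.mulVec v)) := by
          field_simp
      _ ≤ sparseEigSq Q m * c := this

/-- Key lemma: a `k*m`-sparse unit vector has quadratic form at most `k` times
  the maximal `m`-sparse eigenvalue. -/
lemma key {p : ℕ} {Q : Matrix (Fin p) (Fin p) ℝ} (hQ : Q.PosSemidef)
    (k m : ℕ) (hk : 0 < k) (hm : 0 < m) (δ : Fin p → ℝ)
    (hsupp : (Function.support δ).ncard ≤ k * m) (hnorm : δ ⬝ᵥ δ = 1) :
    δ ⬝ᵥ Q.mulVec δ ≤ k * sparseEigSq Q m := by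
  classical
  set s : Finset (Fin p) := Finset.univ.filter (fun x => δ x ≠ 0) with hs
  have hsupp_eq : Function.support δ = ↑s := by
    ext x; simp [hs, Function.mem_support]
  have hcard : s.card ≤ k * m := by
    rwa [hsupp_eq, Set.ncard_coe_finset] at hsupp
  set e := s.equivFin with he
  set idx : Fin p → ℕ := fun x => if h : x ∈ s then (e ⟨x, h⟩ : ℕ) else 0 with hidx
  have idx_lt : ∀ x ∈ s, idx x < k * m := by
    intro x hx
    simp only [hidx, dif_pos hx]
    exact lt_of_lt_of_le (e ⟨x, hx⟩).2 hcard
  have idx_inj : ∀ x ∈ s, ∀ y ∈ s, idx x = idx y → x = y := by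
    intro x hx y hy hxy
    simp only [hidx, dif_pos hx, dif_pos hy] at hxy
    have := e.injective (Fin.ext hxy)
    exact congrArg Subtype.val this
  set blk : Fin k → Fin p → ℝ :=
    fun i x => if x ∈ s ∧ idx x / m = (i : ℕ) then δ x else 0 with hblk
  -- decomposition of δ
  have hdecomp : ∀ x, δ x = ∑ i, blk i x := by
    intro x
    by_cases hx : x ∈ s
    · have hlt : idx x / m < k := Nat.div_lt_of_lt_mul (by rw [mul_comm]; exact idx_lt x hx)
      set i0 : Fin k := ⟨idx x / m, hlt⟩ with hi0
      have hiff : ∀ i : Fin k, (x ∈ s ∧ idx x / m = (i : ℕ)) ↔ i = i0 := by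
        intro i
        constructor
        · rintro ⟨-, h⟩; exact Fin.ext (by simp [hi0, ← h])
        · rintro rfl; exact ⟨hx, rfl⟩
      simp only [hblk, hiff]
      rw [Finset.sum_ite_eq' Finset.univ i0 (fun _ => δ x)]
      simp
    · have hδ : δ x = 0 := by
        by_contra h; exact hx (by simp [hs, h])
      simp only [hblk, hδ]
      simp
  -- squared norms add up
  have hsq : ∑ i, blk i ⬝ᵥ blk i = 1 := by
    rw [← hnorm]
    simp only [dotProduct]
    rw [Finset.sum_comm]
    refine Finset.sum_congr rfl fun x _ => ?_
    by_cases hx : x ∈ s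
    · have hlt : idx x / m < k := Nat.div_lt_of_lt_mul (by rw [mul_comm]; exact idx_lt x hx)
      set i0 : Fin k := ⟨idx x / m, hlt⟩ with hi0
      have hiff : ∀ i : Fin k, (x ∈ s ∧ idx x / m = (i : ℕ)) ↔ i = i0 := by
        intro i
        constructor
        · rintro ⟨-, h⟩; exact Fin.ext (by simp [hi0, ← h])
        · rintro rfl; exact ⟨hx, rfl⟩
      have : ∀ i : Fin k, blk i x * blk i x = if i = i0 then δ x * δ x else 0 := by
        intro i
        simp only [hblk, hiff]
        by_cases h : i = i0 <;> simp [h]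
      rw [Finset.sum_congr rfl fun i _ => this i,
        Finset.sum_ite_eq' Finset.univ i0 (fun _ => δ x * δ x)]
      simp
    · have hδ : δ x = 0 := by
        by_contra h; exact hx (by simp [hs, h])
      simp [hblk, hδ]
  -- each block is m-sparse
  have hblk_supp : ∀ i : Fin k, (Function.support (blk i)).ncard ≤ m := by
    intro i
    set t : Finset (Fin p) := s.filter (fun x => idx x / m = (i : ℕ)) with ht
    have hsub : Function.support (blk i) ⊆ ↑t := by
      intro x hx
      simp only [Function.mem_support, hblk] at hx
      by_cases h : x ∈ s ∧ idx x / m = (i : ℕ)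
      · simp [ht, h.1, h.2]
      · simp [h] at hx
    have htcard : t.card ≤ m := by
      have : t.card ≤ (Finset.Ico ((i : ℕ) * m) ((i : ℕ) * m + m)).card := by
        apply Finset.card_le_card_of_injOn idx
        · intro x hx
          obtain ⟨hxs, hxd⟩ : x ∈ s ∧ idx x / m = (i : ℕ) := by
            simpa [ht] using hx
          rw [Finset.mem_coe, Finset.mem_Ico]
          constructor
          · calc (i : ℕ) * m = idx x / m * m := by rw [hxd]
              _ ≤ idx x := Nat.div_mul_le_self _ _
          · calc idx x < idx x / m * m + m := Nat.lt_div_mul_add hm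
              _ = (i : ℕ) * m + m := by rw [hxd]
        · intro x hx y hy hxy
          obtain ⟨hxs, -⟩ : x ∈ s ∧ idx x / m = (i : ℕ) := by simpa [ht] using hx
          obtain ⟨hys, -⟩ : y ∈ s ∧ idx y / m = (i : ℕ) := by simpa [ht] using hy
          exact idx_inj x hxs y hys hxy
      simpa using this
    calc (Function.support (blk i)).ncard ≤ (↑t : Set (Fin p)).ncard :=
          Set.ncard_le_ncard hsub (t.finite_toSet)
      _ = t.card := Set.ncard_coe_finset t
      _ ≤ m := htcard
  -- expand the quadratic form
  have hδeq : δ = ∑ i, blk i := funext fun x => by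
    rw [hdecomp x]; simp
  have hexpand : δ ⬝ᵥ Q.mulVec δ = ∑ i, ∑ j, blk i ⬝ᵥ Q.mulVec (blk j) := by
    conv_lhs => rw [hδeq]
    have hmv : Q.mulVec (∑ j, blk j) = ∑ j, Q.mulVec (blk j) :=
      map_sum Q.mulVecLin blk Finset.univ
    rw [hmv, dot_sum_left]
    exact Finset.sum_congr rfl fun i _ => dot_sum_right _ _
  set a : Fin k → ℝ := fun i => blk i ⬝ᵥ Q.mulVec (blk i) with ha
  have hstep1 : δ ⬝ᵥ Q.mulVec δ ≤ k * ∑ i, a i := by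
    rw [hexpand]
    have h2 : 2 * ∑ i, ∑ j, blk i ⬝ᵥ Q.mulVec (blk j) ≤ ∑ i : Fin k, ∑ j : Fin k, (a i + a j) := by
      rw [Finset.mul_sum]
      refine Finset.sum_le_sum fun i _ => ?_
      rw [Finset.mul_sum]
      exact Finset.sum_le_sum fun j _ => quad_cs hQ (blk i) (blk j)
    have h3 : ∑ i : Fin k, ∑ j : Fin k, (a i + a j) = 2 * (k * ∑ i, a i) := by
      simp only [Finset.sum_add_distrib, Finset.sum_const, Finset.card_univ,
        Fintype.card_fin, nsmul_eq_mul]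
      rw [← Finset.mul_sum]
      ring
    linarith
  have hstep2 : ∑ i, a i ≤ sparseEigSq Q m := by
    calc ∑ i, a i ≤ ∑ i, sparseEigSq Q m * (blk i ⬝ᵥ blk i) :=
          Finset.sum_le_sum fun i _ => quad_le_sparse hQ (blk i) (hblk_supp i)
      _ = sparseEigSq Q m * ∑ i, blk i ⬝ᵥ blk i := by rw [Finset.mul_sum]
      _ = sparseEigSq Q m := by rw [hsq, mul_one]
  calc δ ⬝ᵥ Q.mulVec δ ≤ k * ∑ i, a i := hstep1
    _ ≤ k * sparseEigSq Q m := by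
        exact mul_le_mul_of_nonneg_left hstep2 (by positivity)

end SparseEigAux

/-- Sublinearity of maximal sparse eigenvalues (Belloni–Chernozhukov): for positive
integers `k, m`, `φ̄(km)² ≤ ⌈k⌉ φ̄(m)² ≤ 2k φ̄(m)²`. -/
theorem sparseEigSq_sublinear (p : ℕ) (Q : Matrix (Fin p) (Fin p) ℝ)
    (hQ : Q.PosSemidef) (k m : ℕ) (hk : 0 < k) (hm : 0 < m) :
    sparseEigSq Q (k * m) ≤ (⌈(k : ℝ)⌉ : ℝ) * sparseEigSq Q m ∧
      (⌈(k : ℝ)⌉ : ℝ) * sparseEigSq Q m ≤ 2 * k * sparseEigSq Q m := by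
  have hceil : (⌈(k : ℝ)⌉ : ℝ) = (k : ℝ) := by
    rw [Int.ceil_natCast]; simp
  have hφ : 0 ≤ sparseEigSq Q m := SparseEigAux.sparseEigSq_nonneg hQ m
  constructor
  · rw [hceil]
    apply Real.sSup_le
    · rintro r ⟨δ, hsupp, hnorm, rfl⟩
      exact SparseEigAux.key hQ k m hk hm δ hsupp hnorm
    · positivity
  · rw [hceil]
    have hk1 : (1 : ℝ) ≤ (k : ℝ) := by exact_mod_cast hk
    nlinarith
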